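/- Let a be a positive integer, let χ_a be the arithmetic function with χ_a(d) = 1 if d ∣ a and χ_a(d) = 0 otherwise, and let g : ℕ⁺ → ℂ be a multiplicative function. Then for every positive integer n, Σ_{lcm(x,y)=n} μ(x) χ_a(x) g(y) = μ(gcd(n, a)) · I(gcd(n / gcd(n, a), a)) · g(n / gcd(n, a)), where μ is the Möbius function and I(k) equals 1 if k = 1 and 0 otherwise. -/

import Mathlib

open ArithmeticFunction Finset
open scoped ArithmeticFunction.zeta

namespace LCMConvAux

lemma gcd_mul_coprime {m n : ℕ} (a : ℕ) (h : Nat.Coprime m n) :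
    Nat.gcd (m * n) a = Nat.gcd m a * Nat.gcd n a := by
  apply Nat.dvd_antisymm
  · have hd : Nat.gcd (m * n) a ∣ m * n := Nat.gcd_dvd_left _ _
    have key := (Nat.gcd_mul_gcd_eq_iff_dvd_mul_of_coprime (x := Nat.gcd (m * n) a) h).mpr hd
    calc Nat.gcd (m * n) a = Nat.gcd (Nat.gcd (m * n) a) m * Nat.gcd (Nat.gcd (m * n) a) n :=
          key.symm
      _ ∣ Nat.gcd m a * Nat.gcd n a := by
          apply Nat.mul_dvd_mul
          · exact Nat.dvd_gcd (Nat.gcd_dvd_right _ _)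
              ((Nat.gcd_dvd_left _ _).trans (Nat.gcd_dvd_right _ _))
          · exact Nat.dvd_gcd (Nat.gcd_dvd_right _ _)
              ((Nat.gcd_dvd_left _ _).trans (Nat.gcd_dvd_right _ _))
  · have hc : Nat.Coprime (Nat.gcd m a) (Nat.gcd n a) :=
      Nat.Coprime.coprime_dvd_right (Nat.gcd_dvd_left n a)
        (Nat.Coprime.coprime_dvd_left (Nat.gcd_dvd_left m a) h)
    exact Nat.dvd_gcd (Nat.mul_dvd_mul (Nat.gcd_dvd_left _ _) (Nat.gcd_dvd_left _ _))
      (hc.mul_dvd_of_dvd_of_dvd (Nat.gcd_dvd_right _ _) (Nat.gcd_dvd_right _ _))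

/-- Key Möbius indicator lemma. -/
lemma sum_moebius_filter {n L : ℕ} (hn : n ≠ 0) (hL : L ∣ n) :
    ∑ e ∈ n.divisors.filter (fun e => L ∣ e), ((moebius (n / e) : ℤ) : ℂ)
      = if L = n then 1 else 0 := by
  obtain ⟨m, rfl⟩ := hL
  have hL0 : L ≠ 0 := by rintro rfl; simp at hn
  have hm0 : m ≠ 0 := by rintro rfl; simp at hn
  have h1 : ∑ e ∈ (L * m).divisors.filter (fun e => L ∣ e), ((moebius ((L * m) / e) : ℤ) : ℂ)
      = ∑ f ∈ m.divisors, ((moebius (m / f) : ℤ) : ℂ) := by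
    apply Finset.sum_nbij' (fun e => e / L) (fun f => f * L)
    · intro e he
      simp only [mem_filter, Nat.mem_divisors] at he
      obtain ⟨⟨hde, _⟩, e', rfl⟩ := he
      simp only [Nat.mem_divisors]
      refine ⟨?_, hm0⟩
      rw [Nat.mul_div_cancel_left _ (Nat.pos_of_ne_zero hL0)]
      exact (Nat.mul_dvd_mul_iff_left (Nat.pos_of_ne_zero hL0)).mp hde
    · intro f hf
      simp only [Nat.mem_divisors] at hf
      simp only [mem_filter, Nat.mem_divisors]
      exact ⟨⟨by rw [mul_comm f L]; exact Nat.mul_dvd_mul_left L hf.1, hn⟩, ⟨f, mul_comm f L⟩⟩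
    · intro e he
      simp only [mem_filter, Nat.mem_divisors] at he
      exact Nat.div_mul_cancel he.2
    · intro f hf
      exact Nat.mul_div_cancel f (Nat.pos_of_ne_zero hL0)
    · intro e he
      simp only [mem_filter, Nat.mem_divisors] at he
      obtain ⟨⟨_, _⟩, e', rfl⟩ := he
      rw [Nat.mul_div_cancel_left _ (Nat.pos_of_ne_zero hL0),
        Nat.mul_div_mul_left _ _ (Nat.pos_of_ne_zero hL0)]
  rw [h1, Nat.sum_div_divisors m (fun d => ((moebius d : ℤ) : ℂ)), ← Int.cast_sum]
  have h2 : ∑ d ∈ m.divisors, moebius d = if m = 1 then (1 : ℤ) else 0 := by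
    have h := congrArg (fun f : ArithmeticFunction ℤ => f m) moebius_mul_coe_zeta
    simp only [coe_mul_zeta_apply, one_apply] at h
    exact h
  have h3 : (L = L * m) ↔ (m = 1) := by
    constructor
    · intro h
      nth_rewrite 1 [← mul_one L] at h
      exact (Nat.eq_of_mul_eq_mul_left (Nat.pos_of_ne_zero hL0) h).symm
    · rintro rfl; simp
  rw [h2]
  by_cases hm1 : m = 1 <;> simp [hm1, h3]


noncomputable def chiA (a : ℕ) : ArithmeticFunction ℂ :=
  ⟨fun d => if d ∣ a ∧ d ≠ 0 then 1 else 0, by simp⟩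

lemma chiA_apply {a d : ℕ} (ha : 0 < a) : chiA a d = if d ∣ a then 1 else 0 := by
  rcases eq_or_ne d 0 with rfl | hd
  · simp [chiA, Nat.zero_dvd, ha.ne']
  · simp [chiA, hd]

lemma chiA_mult {a : ℕ} : (chiA a).IsMultiplicative := by
  constructor
  · simp [chiA]
  · intro m n h
    show (if _ then _ else _) = _
    simp only [chiA, ArithmeticFunction.coe_mk, mul_ne_zero_iff]
    by_cases hm : m ∣ a ∧ m ≠ 0 <;> by_cases hn : n ∣ a ∧ n ≠ 0
    · rw [if_pos, if_pos hm, if_pos hn, mul_one]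
      exact ⟨h.mul_dvd_of_dvd_of_dvd hm.1 hn.1, hm.2, hn.2⟩
    · rw [if_neg, if_pos hm, if_neg hn, mul_zero]
      rintro ⟨hd, hm0, hn0⟩
      exact hn ⟨(dvd_mul_left n m).trans hd, hn0⟩
    · rw [if_neg, if_neg hm, zero_mul]
      rintro ⟨hd, hm0, hn0⟩
      exact hm ⟨(dvd_mul_right m n).trans hd, hm0⟩
    · rw [if_neg, if_neg hm, zero_mul]
      rintro ⟨hd, hm0, hn0⟩
      exact hm ⟨(dvd_mul_right m n).trans hd, hm0⟩

noncomputable def gA (g : ℕ → ℂ) : ArithmeticFunction ℂ :=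
  ⟨fun d => if d = 0 then 0 else g d, by simp⟩

lemma gA_apply {g : ℕ → ℂ} {d : ℕ} (hd : d ≠ 0) : gA g d = g d := by simp [gA, hd]

lemma g_one {g : ℕ → ℂ} (hg0 : ∃ k, g k ≠ 0)
    (hmul : ∀ x y : ℕ, Nat.Coprime x y → g (x * y) = g x * g y) : g 1 = 1 := by
  obtain ⟨k, hk⟩ := hg0
  have h1 := hmul 1 k (Nat.coprime_one_left k)
  rw [one_mul] at h1
  have : g k * 1 = g k * g 1 := by rw [mul_one]; nth_rewrite 1 [h1]; ring
  exact (mul_left_cancel₀ hk this).symm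

lemma gA_mult {g : ℕ → ℂ} (hg0 : ∃ k, g k ≠ 0)
    (hmul : ∀ x y : ℕ, Nat.Coprime x y → g (x * y) = g x * g y) : (gA g).IsMultiplicative := by
  constructor
  · simp [gA, g_one hg0 hmul]
  · intro m n h
    rcases eq_or_ne m 0 with rfl | hm
    · have hn1 : n = 1 := Nat.coprime_zero_left n |>.mp h
      subst hn1; simp [gA]
    rcases eq_or_ne n 0 with rfl | hn
    · simp [gA]
    rw [gA_apply (mul_ne_zero hm hn), gA_apply hm, gA_apply hn]
    exact hmul m n h

noncomputable def muC : ArithmeticFunction ℂ :=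
  ((moebius : ArithmeticFunction ℤ) : ArithmeticFunction ℂ)

lemma muC_apply (d : ℕ) : muC d = ((moebius d : ℤ) : ℂ) := intCoe_apply

lemma muC_mult : muC.IsMultiplicative := isMultiplicative_moebius.intCast

noncomputable def Lfun (a : ℕ) (g : ℕ → ℂ) : ArithmeticFunction ℂ :=
  muC * (ArithmeticFunction.pmul ((ArithmeticFunction.pmul muC (chiA a)) * (ζ : ArithmeticFunction ℂ)) ((gA g) * (ζ : ArithmeticFunction ℂ)))

lemma Lfun_mult {a : ℕ} {g : ℕ → ℂ} (hg0 : ∃ k, g k ≠ 0)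
    (hmul : ∀ x y : ℕ, Nat.Coprime x y → g (x * y) = g x * g y) : (Lfun a g).IsMultiplicative :=
  muC_mult.mul (((muC_mult.pmul chiA_mult).mul isMultiplicative_zeta.natCast).pmul
    ((gA_mult hg0 hmul).mul isMultiplicative_zeta.natCast))

lemma Lfun_eq_sum {a : ℕ} (ha : 0 < a) {g : ℕ → ℂ} {n : ℕ} (hn : n ≠ 0) :
    Lfun a g n = ∑ e ∈ n.divisors, ((moebius (n / e) : ℤ) : ℂ) *
        ((∑ x ∈ e.divisors, ((moebius x : ℤ) : ℂ) * (if x ∣ a then 1 else 0))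
          * (∑ y ∈ e.divisors, g y)) := by
  rw [Lfun, mul_apply, Nat.sum_divisorsAntidiagonal'
    (f := fun d e => muC d * ((ArithmeticFunction.pmul muC (chiA a) * (ζ : ArithmeticFunction ℂ)).pmul
      (gA g * (ζ : ArithmeticFunction ℂ))) e)]
  apply Finset.sum_congr rfl
  intro e he
  rw [Nat.mem_divisors] at he
  have he0 : e ≠ 0 := by rintro rfl; exact hn (Nat.eq_zero_of_zero_dvd he.1)
  rw [muC_apply, pmul_apply, coe_mul_zeta_apply, coe_mul_zeta_apply]
  congr 1
  congr 1
  · apply Finset.sum_congr rfl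
    intro x hx
    rw [Nat.mem_divisors] at hx
    have hx0 : x ≠ 0 := by rintro rfl; exact he0 (Nat.eq_zero_of_zero_dvd hx.1)
    rw [pmul_apply, muC_apply, chiA_apply ha]
  · apply Finset.sum_congr rfl
    intro y hy
    rw [Nat.mem_divisors] at hy
    exact gA_apply (by rintro rfl; exact he0 (Nat.eq_zero_of_zero_dvd hy.1))


lemma step_A (F G : ℕ → ℂ) {n : ℕ} (hn : n ≠ 0) :
    ∑ e ∈ n.divisors, ((moebius (n / e) : ℤ) : ℂ) *
        ((∑ x ∈ e.divisors, F x) * (∑ y ∈ e.divisors, G y))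
      = ∑ p ∈ (n.divisors ×ˢ n.divisors).filter (fun p => Nat.lcm p.1 p.2 = n),
          F p.1 * G p.2 := by
  have key : ∀ e ∈ n.divisors,
      ((moebius (n / e) : ℤ) : ℂ) * ((∑ x ∈ e.divisors, F x) * (∑ y ∈ e.divisors, G y))
        = ∑ p ∈ n.divisors ×ˢ n.divisors,
            if Nat.lcm p.1 p.2 ∣ e then ((moebius (n / e) : ℤ) : ℂ) * (F p.1 * G p.2) else 0 := by
    intro e he
    rw [Nat.mem_divisors] at he
    have he0 : e ≠ 0 := by rintro rfl; exact hn (Nat.eq_zero_of_zero_dvd he.1)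
    have h4 : (e.divisors ×ˢ e.divisors)
        = (n.divisors ×ˢ n.divisors).filter (fun p => Nat.lcm p.1 p.2 ∣ e) := by
      ext p
      simp only [mem_filter, mem_product, Nat.mem_divisors, Nat.lcm_dvd_iff]
      constructor
      · rintro ⟨⟨h1, _⟩, ⟨h2, _⟩⟩
        exact ⟨⟨⟨h1.trans he.1, hn⟩, ⟨h2.trans he.1, hn⟩⟩, h1, h2⟩
      · rintro ⟨_, h1, h2⟩
        exact ⟨⟨h1, he0⟩, h2, he0⟩
    rw [Finset.sum_mul_sum]
    simp only [Finset.mul_sum]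
    rw [← Finset.sum_filter, ← h4, Finset.sum_product]
  rw [Finset.sum_congr rfl key, Finset.sum_comm, Finset.sum_filter]
  apply Finset.sum_congr rfl
  intro p hp
  simp only [mem_product, Nat.mem_divisors] at hp
  have hLd : Nat.lcm p.1 p.2 ∣ n := Nat.lcm_dvd hp.1.1 hp.2.1
  calc ∑ e ∈ n.divisors, (if Nat.lcm p.1 p.2 ∣ e then ((moebius (n / e) : ℤ) : ℂ) * (F p.1 * G p.2) else 0)
      = (∑ e ∈ n.divisors.filter (fun e => Nat.lcm p.1 p.2 ∣ e), ((moebius (n / e) : ℤ) : ℂ)) * (F p.1 * G p.2) := by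
        rw [← Finset.sum_filter, Finset.sum_mul]
    _ = (if Nat.lcm p.1 p.2 = n then 1 else 0) * (F p.1 * G p.2) := by
        rw [sum_moebius_filter hn hLd]
    _ = if Nat.lcm p.1 p.2 = n then F p.1 * G p.2 else 0 := by
        split <;> simp


section PP
variable {a p : ℕ}

lemma muC_one : muC 1 = 1 := by rw [muC_apply]; simp
lemma muC_prime (hp : p.Prime) : muC p = -1 := by rw [muC_apply, moebius_apply_prime hp]; simp
lemma muC_pp (hp : p.Prime) {i : ℕ} (hi : 2 ≤ i) : muC (p ^ i) = 0 := by
  rw [muC_apply, moebius_apply_prime_pow hp (by omega), if_neg (by omega)]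
  simp

-- value of H at prime powers
lemma Hval (hp : p.Prime) (ha : 0 < a) (e : ℕ) :
    ((ArithmeticFunction.pmul muC (chiA a)) * (ζ : ArithmeticFunction ℂ)) (p ^ e)
      = if e = 0 then 1 else 1 - (if p ∣ a then 1 else 0) := by
  rw [coe_mul_zeta_apply, Nat.sum_divisors_prime_pow hp]
  rcases Nat.eq_zero_or_pos e with rfl | he
  · simp [pmul_apply, muC_one, chiA_apply ha, Nat.one_dvd]
  · rw [if_neg he.ne']
    induction e with
    | zero => omega
    | succ e ih =>
      rcases Nat.eq_zero_or_pos e with rfl | he'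
      · rw [Finset.sum_range_succ, Finset.sum_range_one]
        simp only [pow_zero, pow_one, pmul_apply, muC_one, muC_prime hp, chiA_apply ha]
        rw [if_pos (Nat.one_dvd a)]
        ring
      · rw [Finset.sum_range_succ, ih he', pmul_apply, muC_pp hp (by omega)]
        ring

lemma Gval (hp : p.Prime) (g : ℕ → ℂ) (e : ℕ) :
    ((gA g) * (ζ : ArithmeticFunction ℂ)) (p ^ e)
      = ∑ i ∈ Finset.range (e + 1), gA g (p ^ i) := by
  rw [coe_mul_zeta_apply, Nat.sum_divisors_prime_pow hp]

lemma Lfun_pp (hp : p.Prime) (g : ℕ → ℂ) (k : ℕ) :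
    Lfun a g (p ^ k)
      = ∑ i ∈ Finset.range (k + 1), muC (p ^ (k - i)) *
          ((ArithmeticFunction.pmul ((ArithmeticFunction.pmul muC (chiA a)) * (ζ : ArithmeticFunction ℂ))
            ((gA g) * (ζ : ArithmeticFunction ℂ))) (p ^ i)) := by
  rw [Lfun, mul_apply, Nat.sum_divisorsAntidiagonal'
    (f := fun d e => muC d * ((ArithmeticFunction.pmul ((ArithmeticFunction.pmul muC (chiA a)) * (ζ : ArithmeticFunction ℂ))
      ((gA g) * (ζ : ArithmeticFunction ℂ))) e)), Nat.sum_divisors_prime_pow hp]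
  apply Finset.sum_congr rfl
  intro i hi
  rw [Finset.mem_range] at hi
  rw [Nat.pow_div (by omega) hp.pos]

/-- The main prime power computation. -/
lemma Lfun_pp_val (hp : p.Prime) (ha : 0 < a) (g : ℕ → ℂ) (k : ℕ) (hg1 : g 1 = 1) :
    Lfun a g (p ^ k) =
      if p ∣ a then (if k = 0 then 1 else if k = 1 then -1 else 0)
      else g (p ^ k) := by
  rw [Lfun_pp hp g k]
  have hgA1 : gA g 1 = 1 := by rw [gA_apply one_ne_zero, hg1]
  rcases Nat.lt_or_ge k 2 with hk | hk
  · interval_cases k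
    · -- k = 0
      rw [Finset.sum_range_one, pmul_apply, Hval hp ha 0, Gval hp g 0,
        Finset.sum_range_one]
      rw [if_pos rfl, Nat.sub_zero]
      by_cases hpa : p ∣ a <;> simp [hpa, hgA1, muC_one, hg1]
    · -- k = 1
      rw [Finset.sum_range_succ, Finset.sum_range_one, pmul_apply, pmul_apply,
        Hval hp ha 0, Hval hp ha 1, Gval hp g 0, Gval hp g 1,
        Finset.sum_range_one, Finset.sum_range_succ, Finset.sum_range_one]
      by_cases hpa : p ∣ a <;>
        simp [hpa, muC_one, muC_prime hp, hgA1, gA_apply hp.pos.ne', hg1] <;> ring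
  · -- k ≥ 2
    obtain ⟨j, rfl⟩ : ∃ j, k = j + 2 := ⟨k - 2, by omega⟩
    rw [show j + 2 + 1 = (j + 1) + 1 + 1 by ring]
    rw [Finset.sum_range_succ, Finset.sum_range_succ]
    have hzero : ∀ i ∈ Finset.range (j + 1), muC (p ^ (j + 2 - i)) *
        ((ArithmeticFunction.pmul ((ArithmeticFunction.pmul muC (chiA a)) * (ζ : ArithmeticFunction ℂ))
          ((gA g) * (ζ : ArithmeticFunction ℂ))) (p ^ i)) = 0 := by
      intro i hi
      rw [Finset.mem_range] at hi
      rw [muC_pp hp (by omega), zero_mul]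
    rw [Finset.sum_eq_zero hzero, zero_add, pmul_apply, pmul_apply,
      Hval hp ha (j + 1), Hval hp ha (j + 1 + 1), Gval hp g (j + 1), Gval hp g (j + 1 + 1)]
    rw [show j + 2 - (j + 1) = 1 by omega, Nat.sub_self, pow_zero, pow_one, muC_one,
      muC_prime hp, if_neg (show ¬(j + 1 = 0) by omega), if_neg (show ¬(j + 1 + 1 = 0) by omega)]
    rw [Finset.sum_range_succ (n := j + 1 + 1)]
    rw [gA_apply (pow_ne_zero (j + 1 + 1) hp.pos.ne')]
    rw [if_neg (show ¬(j + 2 = 0) by omega), if_neg (show ¬(j + 2 = 1) by omega)]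
    by_cases hpa : p ∣ a
    · simp [hpa]
    · simp only [hpa, if_false]
      ring

end PP


noncomputable def Rfun (a : ℕ) (g : ℕ → ℂ) : ArithmeticFunction ℂ :=
  ⟨fun n => if n = 0 then 0 else
    ((moebius (Nat.gcd n a) : ℤ) : ℂ) * (if Nat.gcd (n / Nat.gcd n a) a = 1 then 1 else 0) *
      g (n / Nat.gcd n a), by simp⟩

lemma Rfun_apply {a : ℕ} {g : ℕ → ℂ} {n : ℕ} (hn : n ≠ 0) :
    Rfun a g n = ((moebius (Nat.gcd n a) : ℤ) : ℂ) *
      (if Nat.gcd (n / Nat.gcd n a) a = 1 then 1 else 0) * g (n / Nat.gcd n a) := by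
  simp [Rfun, hn]

lemma Rfun_pp_val {a p : ℕ} (hp : p.Prime) (ha : 0 < a) (g : ℕ → ℂ) (k : ℕ) (hg1 : g 1 = 1) :
    Rfun a g (p ^ k) =
      if p ∣ a then (if k = 0 then 1 else if k = 1 then -1 else 0)
      else g (p ^ k) := by
  have hpk : p ^ k ≠ 0 := pow_ne_zero k hp.pos.ne'
  rw [Rfun_apply hpk]
  by_cases hpa : p ∣ a
  · rw [if_pos hpa]
    rcases Nat.eq_zero_or_pos k with rfl | hk
    · simp [Nat.gcd_one_left, hg1, ha.ne']
    · have hd : Nat.gcd (p ^ k) a ∣ p ^ k := Nat.gcd_dvd_left _ _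
      obtain ⟨j, hj, hdj⟩ := (Nat.dvd_prime_pow hp).mp hd
      have hpd : p ∣ Nat.gcd (p ^ k) a :=
        Nat.dvd_gcd (dvd_pow_self p hk.ne') hpa
      have hj1 : 1 ≤ j := by
        rcases Nat.eq_zero_or_pos j with rfl | h
        · rw [hdj, pow_zero, Nat.dvd_one] at hpd
          exact absurd hpd hp.ne_one
        · exact h
      rcases eq_or_lt_of_le hj1 with hj2 | hj2
      · -- j = 1, d = p
        rw [hdj, ← hj2, pow_one]
        have hdiv : p ^ k / p = p ^ (k - 1) := by
          nth_rewrite 1 [show k = (k - 1) + 1 by omega]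
          rw [pow_succ, Nat.mul_div_cancel _ hp.pos]
        rw [hdiv]
        rcases eq_or_lt_of_le (show 1 ≤ k from hk) with hk1 | hk2
        · -- k = 1
          rw [← hk1]
          simp [moebius_apply_prime hp, Nat.gcd_one_left, hg1]
        · -- k ≥ 2 : gcd(p^(k-1), a) ≠ 1
          have hne : Nat.gcd (p ^ (k - 1)) a ≠ 1 := by
            intro h1
            have : p ∣ Nat.gcd (p ^ (k - 1)) a :=
              Nat.dvd_gcd (dvd_pow_self p (by omega)) hpa
            rw [h1] at this
            exact hp.ne_one (Nat.dvd_one.mp this)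
          rw [if_neg hne, if_neg (by omega), if_neg (by omega)]
          ring
      · -- j ≥ 2 : μ(p^j) = 0
        rw [hdj, moebius_apply_prime_pow hp (by omega), if_neg (show ¬(j = 1) by omega)]
        rw [if_neg (show ¬(k = 0) by omega), if_neg (show ¬(k = 1) by omega)]
        push_cast
        ring
  · rw [if_neg hpa]
    have hcop : Nat.Coprime (p ^ k) a :=
      Nat.Coprime.pow_left k (hp.coprime_iff_not_dvd.mpr hpa)
    rw [hcop.gcd_eq_one, Nat.div_one, if_pos hcop.gcd_eq_one]
    simp


lemma Rfun_mult {a : ℕ} (ha : 0 < a) {g : ℕ → ℂ} (hg0 : ∃ k, g k ≠ 0)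
    (hmul : ∀ x y : ℕ, Nat.Coprime x y → g (x * y) = g x * g y) :
    (Rfun a g).IsMultiplicative := by
  constructor
  · rw [Rfun_apply one_ne_zero]
    simp [Nat.gcd_one_left, g_one hg0 hmul]
  · intro m n h
    rcases eq_or_ne m 0 with rfl | hm
    · have hn1 : n = 1 := Nat.coprime_zero_left n |>.mp h
      subst hn1
      simp [Rfun, Nat.gcd_one_left, g_one hg0 hmul]
    rcases eq_or_ne n 0 with rfl | hn
    · have hm1 : m = 1 := Nat.coprime_zero_right m |>.mp h
      subst hm1
      simp [Rfun, Nat.gcd_one_left, g_one hg0 hmul]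
    rw [Rfun_apply (mul_ne_zero hm hn), Rfun_apply hm, Rfun_apply hn]
    have hdm : Nat.gcd m a ∣ m := Nat.gcd_dvd_left m a
    have hdn : Nat.gcd n a ∣ n := Nat.gcd_dvd_left n a
    have hgcd : Nat.gcd (m * n) a = Nat.gcd m a * Nat.gcd n a := gcd_mul_coprime a h
    have hq : m * n / Nat.gcd (m * n) a = (m / Nat.gcd m a) * (n / Nat.gcd n a) := by
      rw [hgcd, Nat.div_mul_div_comm hdm hdn]
    have hqm : m / Nat.gcd m a ∣ m := Nat.div_dvd_of_dvd hdm
    have hqn : n / Nat.gcd n a ∣ n := Nat.div_dvd_of_dvd hdn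
    have hcq : Nat.Coprime (m / Nat.gcd m a) (n / Nat.gcd n a) :=
      Nat.Coprime.coprime_dvd_right hqn (Nat.Coprime.coprime_dvd_left hqm h)
    have hcd : Nat.Coprime (Nat.gcd m a) (Nat.gcd n a) :=
      Nat.Coprime.coprime_dvd_right hdn (Nat.Coprime.coprime_dvd_left hdm h)
    rw [hq, hgcd]
    rw [isMultiplicative_moebius.map_mul_of_coprime hcd]
    rw [hmul _ _ hcq]
    have hind : (Nat.gcd (m / Nat.gcd m a * (n / Nat.gcd n a)) a = 1)
        ↔ (Nat.gcd (m / Nat.gcd m a) a = 1 ∧ Nat.gcd (n / Nat.gcd n a) a = 1) := by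
      rw [gcd_mul_coprime a hcq]
      exact mul_eq_one
    push_cast
    by_cases h1 : Nat.gcd (m / Nat.gcd m a) a = 1 <;>
      by_cases h2 : Nat.gcd (n / Nat.gcd n a) a = 1 <;>
      simp [hind, h1, h2] <;> ring


end LCMConvAux

open Finset in
/-- For a positive integer `a`, the indicator `χ_a` of divisors of `a`, and a multiplicative
function `g`, for every `n ≥ 1`:
`Σ_{lcm(x,y)=n} μ(x) χ_a(x) g(y) = μ(gcd(n,a)) · I(gcd(n/gcd(n,a), a)) · g(n/gcd(n,a))`. -/
theorem lcm_convolution_moebius_chi_multiplicative (a : ℕ) (ha : 0 < a) (g : ℕ → ℂ)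
    (hg0 : ∃ k, g k ≠ 0) (hmul : ∀ x y : ℕ, Nat.Coprime x y → g (x * y) = g x * g y)
    (n : ℕ) (hn : 0 < n) :
    ∑ x ∈ (n.divisors ×ˢ n.divisors).filter (fun x => Nat.lcm x.1 x.2 = n),
        ((ArithmeticFunction.moebius x.1 : ℤ) : ℂ) * (if x.1 ∣ a then 1 else 0) * g x.2 =
      ((ArithmeticFunction.moebius (Nat.gcd n a) : ℤ) : ℂ) *
        (if Nat.gcd (n / Nat.gcd n a) a = 1 then 1 else 0) *
        g (n / Nat.gcd n a) := by
  classical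
  have hg1 : g 1 = 1 := LCMConvAux.g_one hg0 hmul
  have hLR : LCMConvAux.Lfun a g = LCMConvAux.Rfun a g := by
    rw [ArithmeticFunction.IsMultiplicative.eq_iff_eq_on_prime_powers _
      (LCMConvAux.Lfun_mult hg0 hmul) _ (LCMConvAux.Rfun_mult ha hg0 hmul)]
    intro p i hp
    rw [LCMConvAux.Lfun_pp_val hp ha g i hg1, LCMConvAux.Rfun_pp_val hp ha g i hg1]
  have h1 : LCMConvAux.Lfun a g n =
      ∑ x ∈ (n.divisors ×ˢ n.divisors).filter (fun x => Nat.lcm x.1 x.2 = n),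
        (fun x => ((ArithmeticFunction.moebius x : ℤ) : ℂ) * (if x ∣ a then 1 else 0)) x.1
          * g x.2 := by
    rw [LCMConvAux.Lfun_eq_sum ha hn.ne']
    exact LCMConvAux.step_A
      (fun x => ((ArithmeticFunction.moebius x : ℤ) : ℂ) * (if x ∣ a then 1 else 0)) g hn.ne'
  rw [← LCMConvAux.Rfun_apply hn.ne', ← hLR, h1]
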